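/- For every nonempty extension-set 𝕊 and each semantics σ ∈ {naive, stb, stage, pref, sem}: σ(F^cf_𝕊) = 𝕊⁺, where F^cf_𝕊 = (Arg_𝕊, (Arg_𝕊 × Arg_𝕊) ∖ Pairs_𝕊) is the canonical AF of 𝕊. -/

import Mathlib

structure AF where
  A : Finset ℕ
  R : Set (ℕ × ℕ)
  R_sub : ∀ p ∈ R, p.1 ∈ A ∧ p.2 ∈ A

namespace AF

def cf (F : AF) : Set (Set ℕ) :=
  {S | S ⊆ ↑F.A ∧ ∀ a ∈ S, ∀ b ∈ S, (a, b) ∉ F.R}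

def defends (F : AF) (S : Set ℕ) (a : ℕ) : Prop :=
  ∀ b, (b, a) ∈ F.R → ∃ s ∈ S, (s, b) ∈ F.R

def adm (F : AF) : Set (Set ℕ) :=
  {S | S ∈ F.cf ∧ ∀ a ∈ S, F.defends S a}

def rng (F : AF) (S : Set ℕ) : Set ℕ :=
  S ∪ {b | ∃ s ∈ S, (s, b) ∈ F.R}

def naive (F : AF) : Set (Set ℕ) :=
  {S | S ∈ F.cf ∧ ∀ T ∈ F.cf, S ⊆ T → S = T}

def stb (F : AF) : Set (Set ℕ) :=
  {S | S ∈ F.cf ∧ ∀ a ∈ F.A, a ∉ S → ∃ s ∈ S, (s, a) ∈ F.R}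

def pref (F : AF) : Set (Set ℕ) :=
  {S | S ∈ F.adm ∧ ∀ T ∈ F.adm, S ⊆ T → S = T}

def stage (F : AF) : Set (Set ℕ) :=
  {S | S ∈ F.cf ∧ ¬ ∃ T ∈ F.cf, F.rng S ⊂ F.rng T}

def sem (F : AF) : Set (Set ℕ) :=
  {S | S ∈ F.adm ∧ ¬ ∃ T ∈ F.adm, F.rng S ⊂ F.rng T}

end AF

abbrev Semantics := AF → Set (Set ℕ)

def StandardSemantics : Set Semantics :=
  {AF.naive, AF.stb, AF.stage, AF.pref, AF.sem}

def AFCompact (σ : Semantics) (F : AF) : Prop :=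
  ∀ a ∈ F.A, ∃ S ∈ σ F, a ∈ S

def CAF (σ : Semantics) : Set AF := {F | AFCompact σ F}

def ArgS (𝕊 : Set (Set ℕ)) : Set ℕ := ⋃₀ 𝕊

def PairsS (𝕊 : Set (Set ℕ)) : Set (ℕ × ℕ) :=
  {p | ∃ S ∈ 𝕊, p.1 ∈ S ∧ p.2 ∈ S}

def IsExtensionSet (𝕊 : Set (Set ℕ)) : Prop := (ArgS 𝕊).Finite

def AFStep (F : AF) (a b : ℕ) : Prop := (a, b) ∈ F.R ∨ (b, a) ∈ F.R

def AFConnected (F : AF) : Prop :=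
  ∀ a ∈ F.A, ∀ b ∈ F.A, Relation.ReflTransGen (AFStep F) a b

def sameComp (F : AF) (a b : ℕ) : Prop := Relation.ReflTransGen (AFStep F) a b

def comps (F : AF) : Set (Set ℕ) :=
  {K | ∃ a ∈ F.A, K = {b ∈ (↑F.A : Set ℕ) | sameComp F a b}}

def nopairs (𝕊 : Set (Set ℕ)) (a b : ℕ) : Prop :=
  a ∈ ArgS 𝕊 ∧ b ∈ ArgS 𝕊 ∧ (a, b) ∉ PairsS 𝕊

def compsS (𝕊 : Set (Set ℕ)) : Set (Set ℕ) :=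
  {K | ∃ a ∈ ArgS 𝕊, K = {b ∈ ArgS 𝕊 | Relation.ReflTransGen (nopairs 𝕊) a b}}

noncomputable def sigmaMax (σ : Semantics) (n : ℕ) : ℕ :=
  sSup {k | ∃ F : AF, F.A.card = n ∧ (σ F).ncard = k}

noncomputable def sigmaMaxCon (σ : Semantics) (n : ℕ) : ℕ :=
  sSup {k | ∃ F : AF, F.A.card = n ∧ AFConnected F ∧ (σ F).ncard = k}

noncomputable def sigmaMax2 (σ : Semantics) (n : ℕ) : ℕ :=
  sSup ({k | ∃ F : AF, F.A.card = n ∧ (σ F).ncard = k} \ {sigmaMax σ n})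

def cfSet (𝕊 : Set (Set ℕ)) : Set (Set ℕ) :=
  {S | S ⊆ ArgS 𝕊 ∧ ∀ a ∈ S, ∀ b ∈ S, (a, b) ∈ PairsS 𝕊}

def plusSet (𝕊 : Set (Set ℕ)) : Set (Set ℕ) :=
  {S | S ∈ cfSet 𝕊 ∧ ∀ T ∈ cfSet 𝕊, S ⊆ T → S = T}

def minusSet (𝕊 : Set (Set ℕ)) : Set (Set ℕ) := plusSet 𝕊 \ 𝕊

def Sig (σ : Semantics) : Set (Set (Set ℕ)) := {𝕊 | ∃ F : AF, σ F = 𝕊}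

def cSig (σ : Semantics) : Set (Set (Set ℕ)) :=
  {𝕊 | ∃ F : AF, AFCompact σ F ∧ σ F = 𝕊}

def Pcon (σ : Semantics) (n : ℕ) : Set ℕ :=
  {k | ∃ F : AF, AFCompact σ F ∧ AFConnected F ∧ F.A.card = n ∧ (σ F).ncard = k}

open Classical in
noncomputable def restrictAF (F : AF) (K : Set ℕ) : AF where
  A := F.A.filter (fun a => a ∈ K)
  R := {p | p ∈ F.R ∧ p.1 ∈ K ∧ p.2 ∈ K}
  R_sub := fun p hp => by
    have h := F.R_sub p hp.1
    simp only [Finset.mem_filter]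
    exact ⟨⟨h.1, hp.2.1⟩, ⟨h.2, hp.2.2⟩⟩

def IsExclusionMapping (𝕊 : Set (Set ℕ)) (Rm : Set (ℕ × ℕ)) : Prop :=
  ∃ f : Set ℕ → ℕ,
    (∀ S ∈ minusSet 𝕊, f S ∈ ArgS 𝕊 ∧ f S ∉ S) ∧
    Rm = {p | ∃ S ∈ minusSet 𝕊, p.1 ∈ S ∧ p.2 = f S ∧ p ∉ PairsS 𝕊}

def Independent (𝕊 : Set (Set ℕ)) : Prop :=
  ∃ Rm : Set (ℕ × ℕ), IsExclusionMapping 𝕊 Rm ∧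
    (∀ a b, (a, b) ∈ Rm → (b, a) ∈ Rm → a = b) ∧
    ∀ S ∈ 𝕊, ∀ a ∈ ArgS 𝕊 \ S, ∃ s ∈ S, (s, a) ∉ Rm ∪ PairsS 𝕊

def ConflictExplicit (σ : Semantics) (F : AF) : Prop :=
  ∀ a ∈ F.A, ∀ b ∈ F.A, (a, b) ∉ PairsS (σ F) → (a, b) ∈ F.R ∨ (b, a) ∈ F.R

noncomputable def canonicalCF (𝕊 : Set (Set ℕ)) (h : IsExtensionSet 𝕊) : AF where
  A := h.toFinset
  R := {p | p.1 ∈ ArgS 𝕊 ∧ p.2 ∈ ArgS 𝕊 ∧ p ∉ PairsS 𝕊}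
  R_sub := fun p hp => by
    constructor
    · first
        | exact (Set.Finite.mem_toFinset (s := ArgS 𝕊) h).2 hp.1
        | exact (Set.Finite.mem_toFinset (s := ArgS 𝕊) (hs := h)).2 hp.1
    · first
        | exact (Set.Finite.mem_toFinset (s := ArgS 𝕊) h).2 hp.2.1
        | exact (Set.Finite.mem_toFinset (s := ArgS 𝕊) (hs := h)).2 hp.2.1

namespace CanonProof

variable {𝕊 : Set (Set ℕ)}

lemma pairs_symm {a b : ℕ} (h : (a,b) ∈ PairsS 𝕊) : (b,a) ∈ PairsS 𝕊 := by
  obtain ⟨S, hS, h1, h2⟩ := h; exact ⟨S, hS, h2, h1⟩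

lemma pairs_self {a : ℕ} (h : a ∈ ArgS 𝕊) : (a,a) ∈ PairsS 𝕊 := by
  obtain ⟨S, hS, ha⟩ := h; exact ⟨S, hS, ha, ha⟩

variable (hext : IsExtensionSet 𝕊)

lemma mem_R {a b : ℕ} :
    (a,b) ∈ (canonicalCF 𝕊 hext).R ↔ a ∈ ArgS 𝕊 ∧ b ∈ ArgS 𝕊 ∧ (a,b) ∉ PairsS 𝕊 :=
  Iff.rfl

lemma coe_A : ((canonicalCF 𝕊 hext).A : Set ℕ) = ArgS 𝕊 := hext.coe_toFinset

lemma mem_A {a : ℕ} : a ∈ (canonicalCF 𝕊 hext).A ↔ a ∈ ArgS 𝕊 := hext.mem_toFinset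

lemma cf_eq : (canonicalCF 𝕊 hext).cf = cfSet 𝕊 := by
  ext S
  constructor
  · rintro ⟨hsub, hcf⟩
    rw [coe_A] at hsub
    refine ⟨hsub, fun a ha b hb => ?_⟩
    by_contra hp
    exact hcf a ha b hb ⟨hsub ha, hsub hb, hp⟩
  · rintro ⟨hsub, hcf⟩
    exact ⟨by rw [coe_A]; exact hsub, fun a ha b hb hR => hR.2.2 (hcf a ha b hb)⟩

lemma adm_eq : (canonicalCF 𝕊 hext).adm = (canonicalCF 𝕊 hext).cf := by
  ext S
  refine ⟨fun h => h.1, fun h => ⟨h, fun a ha b hba => ⟨a, ha, ?_⟩⟩⟩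
  exact ⟨hba.2.1, hba.1, fun hp => hba.2.2 (pairs_symm hp)⟩

lemma naive_eq : (canonicalCF 𝕊 hext).naive = plusSet 𝕊 := by
  simp only [AF.naive, plusSet, cf_eq]

include hext in
lemma exists_plus (S : Set ℕ) (hS : S ∈ cfSet 𝕊) : ∃ T ∈ plusSet 𝕊, S ⊆ T := by
  have hfin : {T | T ∈ cfSet 𝕊 ∧ S ⊆ T}.Finite :=
    (Set.Finite.finite_subsets hext).subset (fun T hT => hT.1.1)
  obtain ⟨T, hT, hmax⟩ := Set.Finite.exists_maximalFor id _ hfin ⟨S, hS, subset_rfl⟩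
  exact ⟨T, ⟨hT.1, fun T' hT' hsub => hsub.antisymm (hmax ⟨hT', hT.2.trans hsub⟩ hsub)⟩, hT.2⟩

lemma stb_eq : (canonicalCF 𝕊 hext).stb = plusSet 𝕊 := by
  ext S
  constructor
  · rintro ⟨hcf, hstb⟩
    have hcf' : S ∈ cfSet 𝕊 := by rw [← cf_eq hext]; exact hcf
    refine ⟨hcf', fun T hT hsub => hsub.antisymm fun a haT => ?_⟩
    by_contra haS
    obtain ⟨s, hs, hR⟩ := hstb a ((mem_A hext).2 (hT.1 haT)) haS
    exact hR.2.2 (hT.2 s (hsub hs) a haT)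
  · rintro ⟨hcf, hmax⟩
    refine ⟨by rw [cf_eq hext]; exact hcf, fun a haA haS => ?_⟩
    by_contra hno
    push_neg at hno
    have haArg : a ∈ ArgS 𝕊 := (mem_A hext).1 haA
    have hp : ∀ s ∈ S, (s,a) ∈ PairsS 𝕊 := fun s hs => by
      by_contra h; exact hno s hs ⟨hcf.1 hs, haArg, h⟩
    have hcup : S ∪ {a} ∈ cfSet 𝕊 := by
      refine ⟨Set.union_subset hcf.1 (by simpa using haArg), ?_⟩
      rintro x (hx | hx) y (hy | hy)
      · exact hcf.2 x hx y hy
      · simp only [Set.mem_singleton_iff] at hy; subst hy; exact hp x hx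
      · simp only [Set.mem_singleton_iff] at hx; subst hx; exact pairs_symm (hp y hy)
      · simp only [Set.mem_singleton_iff] at hx hy; subst hx; subst hy
        exact pairs_self haArg
    have := hmax _ hcup Set.subset_union_left
    exact haS (this ▸ Set.mem_union_right S rfl)

lemma rng_sub (S : Set ℕ) (hS : S ∈ (canonicalCF 𝕊 hext).cf) :
    (canonicalCF 𝕊 hext).rng S ⊆ ArgS 𝕊 := by
  rintro b (hb | ⟨s, hs, hR⟩)
  · have := hS.1 hb; rwa [coe_A] at this
  · exact hR.2.1

lemma stb_rng (S : Set ℕ) (hS : S ∈ (canonicalCF 𝕊 hext).stb) :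
    (canonicalCF 𝕊 hext).rng S = ArgS 𝕊 := by
  refine subset_antisymm (rng_sub hext S hS.1) fun a ha => ?_
  by_cases h : a ∈ S
  · exact Or.inl h
  · obtain ⟨s, hs, hR⟩ := hS.2 a ((mem_A hext).2 ha) h
    exact Or.inr ⟨s, hs, hR⟩

lemma stage_eq : (canonicalCF 𝕊 hext).stage = (canonicalCF 𝕊 hext).stb := by
  ext S
  constructor
  · rintro ⟨hcf, hnost⟩
    have hcf' : S ∈ cfSet 𝕊 := by rw [← cf_eq hext]; exact hcf
    obtain ⟨T, hT, hsub⟩ := exists_plus hext S hcf'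
    have hTstb : T ∈ (canonicalCF 𝕊 hext).stb := by rw [stb_eq hext]; exact hT
    have hrngS : (canonicalCF 𝕊 hext).rng S = ArgS 𝕊 := by
      by_contra hne
      exact hnost ⟨T, hTstb.1, Set.ssubset_iff_subset_ne.mpr
        ⟨(rng_sub hext S hcf).trans_eq (stb_rng hext T hTstb).symm,
          fun h => hne (h.trans (stb_rng hext T hTstb))⟩⟩
    refine ⟨hcf, fun a haA haS => ?_⟩
    have : a ∈ (canonicalCF 𝕊 hext).rng S := hrngS ▸ (mem_A hext).1 haA
    rcases this with h | ⟨s, hs, hR⟩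
    · exact absurd h haS
    · exact ⟨s, hs, hR⟩
  · rintro hS
    refine ⟨hS.1, ?_⟩
    rintro ⟨T, hT, hss⟩
    exact hss.not_subset ((rng_sub hext T hT).trans_eq (stb_rng hext S hS).symm)

lemma pref_eq : (canonicalCF 𝕊 hext).pref = (canonicalCF 𝕊 hext).naive := by
  simp only [AF.pref, AF.naive, adm_eq hext]

lemma sem_eq : (canonicalCF 𝕊 hext).sem = (canonicalCF 𝕊 hext).stage := by
  simp only [AF.sem, AF.stage, adm_eq hext]

end CanonProof

theorem canonical_af_realizes_plus (σ : Semantics) (hσ : σ ∈ StandardSemantics)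
    (𝕊 : Set (Set ℕ)) (hne : 𝕊 ≠ ∅) (hext : IsExtensionSet 𝕊) :
    σ (canonicalCF 𝕊 hext) = plusSet 𝕊 := by
  simp only [StandardSemantics, Set.mem_insert_iff, Set.mem_singleton_iff] at hσ
  rcases hσ with rfl | rfl | rfl | rfl | rfl
  · exact CanonProof.naive_eq hext
  · exact CanonProof.stb_eq hext
  · rw [CanonProof.stage_eq hext]; exact CanonProof.stb_eq hext
  · rw [CanonProof.pref_eq hext]; exact CanonProof.naive_eq hext
  · rw [CanonProof.sem_eq hext, CanonProof.stage_eq hext]; exact CanonProof.stb_eq hext
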